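/- Under the assumption M ⊥ R | X, Y, G=1, the missing-data outcome distribution is recovered as p(Y=y | R=0, X=x, M=m, G=1) = p(Y=y | R=1, X=x, M=m, G=1) · OR(x,y) / E[OR(X,Y) | R=1, X=x, M=m, G=1], where OR(x,y) = [p(R=0|X=x,Y=y,G=1) p(R=1|X=x,Y=0,G=1)] / [p(R=1|X=x,Y=y,G=1) p(R=0|X=x,Y=0,G=1)]. -/

import Mathlib

open Finset Set Real

noncomputable def Pr {Ω : Type*} [Fintype Ω] (μ : Ω → ℝ) (A : Set Ω) : ℝ :=
  ∑ ω, A.indicator μ ω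

noncomputable def cPr {Ω : Type*} [Fintype Ω] (μ : Ω → ℝ) (A B : Set Ω) : ℝ :=
  Pr μ (A ∩ B) / Pr μ B

noncomputable def cE {Ω : Type*} [Fintype Ω] (μ : Ω → ℝ) (f : Ω → ℝ) (B : Set Ω) : ℝ :=
  (∑ ω, B.indicator (fun ω' => μ ω' * f ω') ω) / Pr μ B

noncomputable def OddsR {Ω 𝓧 : Type*} [Fintype Ω] (μ : Ω → ℝ) (X : Ω → 𝓧) (Y : Ω → ℝ)
    (R G : Ω → ℕ) (x : 𝓧) (y : ℝ) : ℝ :=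
  (cPr μ {ω | R ω = 0} {ω | X ω = x ∧ Y ω = y ∧ G ω = 1} *
      cPr μ {ω | R ω = 1} {ω | X ω = x ∧ Y ω = 0 ∧ G ω = 1}) /
  (cPr μ {ω | R ω = 1} {ω | X ω = x ∧ Y ω = y ∧ G ω = 1} *
      cPr μ {ω | R ω = 0} {ω | X ω = x ∧ Y ω = 0 ∧ G ω = 1})

lemma Pr_mono_aux {Ω : Type*} [Fintype Ω] {μ : Ω → ℝ} (hμ : ∀ ω, 0 ≤ μ ω)
    {A B : Set Ω} (h : A ⊆ B) : Pr μ A ≤ Pr μ B := by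
  classical
  refine Finset.sum_le_sum fun ω _ => ?_
  by_cases hA : ω ∈ A
  · rw [Set.indicator_of_mem hA, Set.indicator_of_mem (h hA)]
  · rw [Set.indicator_of_notMem hA]
    by_cases hB : ω ∈ B
    · rw [Set.indicator_of_mem hB]; exact hμ ω
    · rw [Set.indicator_of_notMem hB]

lemma sum_indicator_partition {Ω : Type*} [Fintype Ω] (g : Ω → ℝ) (Y : Ω → ℝ) (B : Set Ω) :
    ∑ ω, B.indicator g ω =
      ∑ y' ∈ Finset.univ.image Y, ∑ ω, ({ω' | Y ω' = y'} ∩ B).indicator g ω := by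
  classical
  have key : ∀ ω : Ω, B.indicator g ω =
      ∑ y' ∈ Finset.univ.image Y, ({ω' | Y ω' = y'} ∩ B).indicator g ω := by
    intro ω
    rw [Finset.sum_eq_single (Y ω)]
    · by_cases h : ω ∈ B
      · rw [Set.indicator_of_mem h,
          Set.indicator_of_mem (show ω ∈ {ω' | Y ω' = Y ω} ∩ B from ⟨rfl, h⟩)]
      · rw [Set.indicator_of_notMem h, Set.indicator_of_notMem (fun hc => h hc.2)]
    · intro b _ hb
      exact Set.indicator_of_notMem (fun hc => hb hc.1.symm) g
    · intro h
      exact absurd (Finset.mem_image_of_mem Y (Finset.mem_univ ω)) h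
  calc ∑ ω, B.indicator g ω
      = ∑ ω, ∑ y' ∈ Finset.univ.image Y, ({ω' | Y ω' = y'} ∩ B).indicator g ω :=
        Finset.sum_congr rfl fun ω _ => key ω
    _ = _ := Finset.sum_comm

lemma Pr_partition {Ω : Type*} [Fintype Ω] (μ : Ω → ℝ) (Y : Ω → ℝ) (B : Set Ω) :
    Pr μ B = ∑ y' ∈ Finset.univ.image Y, Pr μ ({ω' | Y ω' = y'} ∩ B) :=
  sum_indicator_partition μ Y B

theorem stmt3
    {Ω 𝓧 𝓜 : Type*} [Fintype Ω]
    (μ : Ω → ℝ) (X : Ω → 𝓧) (M : Ω → 𝓜) (Y : Ω → ℝ) (R G : Ω → ℕ)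
    (hμ0 : ∀ ω, 0 ≤ μ ω) (hμ1 : ∑ ω, μ ω = 1)
    (hR : ∀ ω, R ω = 0 ∨ R ω = 1)
    (h0Y : (0 : ℝ) ∈ Set.range Y)
    (hpos : ∀ x ∈ Set.range X, ∀ m ∈ Set.range M, ∀ y ∈ Set.range Y, ∀ r : ℕ,
      (r = 0 ∨ r = 1) →
      0 < Pr μ {ω | X ω = x ∧ M ω = m ∧ Y ω = y ∧ R ω = r ∧ G ω = 1})
    (hCI : ∀ (m : 𝓜) (r : ℕ) (x : 𝓧) (y : ℝ),
      0 < Pr μ {ω | X ω = x ∧ Y ω = y ∧ G ω = 1} →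
      cPr μ {ω | M ω = m ∧ R ω = r} {ω | X ω = x ∧ Y ω = y ∧ G ω = 1} =
        cPr μ {ω | M ω = m} {ω | X ω = x ∧ Y ω = y ∧ G ω = 1} *
        cPr μ {ω | R ω = r} {ω | X ω = x ∧ Y ω = y ∧ G ω = 1})
 :
    ∀ x ∈ Set.range X, ∀ y ∈ Set.range Y, ∀ m ∈ Set.range M,
      cPr μ {ω | Y ω = y} {ω | R ω = 0 ∧ X ω = x ∧ M ω = m ∧ G ω = 1} =
        cPr μ {ω | Y ω = y} {ω | R ω = 1 ∧ X ω = x ∧ M ω = m ∧ G ω = 1} *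
          OddsR μ X Y R G x y /
          cE μ (fun ω => OddsR μ X Y R G (X ω) (Y ω))
            {ω | R ω = 1 ∧ X ω = x ∧ M ω = m ∧ G ω = 1} := by
  classical
  intro x hx y hy m hm
  -- notation
  set S : ℝ → Set Ω := fun y' => {ω | X ω = x ∧ Y ω = y' ∧ G ω = 1} with hSdef
  set Aset : Set Ω := {ω | R ω = 0 ∧ X ω = x ∧ M ω = m ∧ G ω = 1} with hAdef
  set Bset : Set Ω := {ω | R ω = 1 ∧ X ω = x ∧ M ω = m ∧ G ω = 1} with hBdef
  set T : Finset ℝ := Finset.univ.image Y with hTdef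
  have hTmem : ∀ y' ∈ T, y' ∈ Set.range Y := by
    intro y' hy'
    rcases Finset.mem_image.1 hy' with ⟨ω, -, rfl⟩
    exact ⟨ω, rfl⟩
  have hyT : y ∈ T := by
    rcases hy with ⟨ω, rfl⟩
    exact Finset.mem_image_of_mem Y (Finset.mem_univ ω)
  -- basic positivity
  have hS : ∀ y' ∈ Set.range Y, 0 < Pr μ (S y') := by
    intro y' hy'
    refine lt_of_lt_of_le (hpos x hx m hm y' hy' 0 (Or.inl rfl)) (Pr_mono_aux hμ0 ?_)
    rintro ω ⟨h1, h2, h3, h4, h5⟩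
    exact ⟨h1, h3, h5⟩
  have hRS : ∀ y' ∈ Set.range Y, ∀ r : ℕ, (r = 0 ∨ r = 1) →
      0 < Pr μ ({ω | R ω = r} ∩ S y') := by
    intro y' hy' r hr
    refine lt_of_lt_of_le (hpos x hx m hm y' hy' r hr) (Pr_mono_aux hμ0 ?_)
    rintro ω ⟨h1, h2, h3, h4, h5⟩
    exact ⟨h4, h1, h3, h5⟩
  have ha_pos : ∀ y' ∈ Set.range Y, 0 < Pr μ ({ω | Y ω = y'} ∩ Aset) := by
    intro y' hy'
    refine lt_of_lt_of_le (hpos x hx m hm y' hy' 0 (Or.inl rfl)) (Pr_mono_aux hμ0 ?_)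
    rintro ω ⟨h1, h2, h3, h4, h5⟩
    exact ⟨h3, h4, h1, h2, h5⟩
  have hb_pos : ∀ y' ∈ Set.range Y, 0 < Pr μ ({ω | Y ω = y'} ∩ Bset) := by
    intro y' hy'
    refine lt_of_lt_of_le (hpos x hx m hm y' hy' 1 (Or.inr rfl)) (Pr_mono_aux hμ0 ?_)
    rintro ω ⟨h1, h2, h3, h4, h5⟩
    exact ⟨h3, h4, h1, h2, h5⟩
  -- odds of nonmissingness
  set ρ : ℝ → ℝ := fun y' =>
    Pr μ ({ω | R ω = 0} ∩ S y') / Pr μ ({ω | R ω = 1} ∩ S y') with hρdef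
  have hρ_pos : ∀ y' ∈ Set.range Y, 0 < ρ y' := by
    intro y' hy'
    exact div_pos (hRS y' hy' 0 (Or.inl rfl)) (hRS y' hy' 1 (Or.inr rfl))
  -- product form of CI
  have hprod : ∀ y' ∈ Set.range Y, ∀ r : ℕ,
      Pr μ ({ω | M ω = m ∧ R ω = r} ∩ S y') * Pr μ (S y') =
        Pr μ ({ω | M ω = m} ∩ S y') * Pr μ ({ω | R ω = r} ∩ S y') := by
    intro y' hy' r
    have h := hCI m r x y' (hS y' hy')
    unfold cPr at h
    have hSne : Pr μ (S y') ≠ 0 := (hS y' hy').ne'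
    change Pr μ ({ω | M ω = m ∧ R ω = r} ∩ S y') / Pr μ (S y') =
      Pr μ ({ω | M ω = m} ∩ S y') / Pr μ (S y') * (Pr μ ({ω | R ω = r} ∩ S y') / Pr μ (S y')) at h
    rw [div_mul_div_comm, div_eq_div_iff hSne (mul_ne_zero hSne hSne)] at h
    refine mul_right_cancel₀ hSne ?_
    linear_combination h
  -- tilting identity
  have htilt : ∀ y' ∈ Set.range Y,
      Pr μ ({ω | Y ω = y'} ∩ Aset) = ρ y' * Pr μ ({ω | Y ω = y'} ∩ Bset) := by
    intro y' hy'
    have hA' : ({ω | Y ω = y'} ∩ Aset) = ({ω | M ω = m ∧ R ω = 0} ∩ S y') := by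
      ext ω; simp only [hAdef, hSdef, Set.mem_inter_iff, Set.mem_setOf_eq]; tauto
    have hB' : ({ω | Y ω = y'} ∩ Bset) = ({ω | M ω = m ∧ R ω = 1} ∩ S y') := by
      ext ω; simp only [hBdef, hSdef, Set.mem_inter_iff, Set.mem_setOf_eq]; tauto
    rw [hA', hB']
    have e0 := hprod y' hy' 0
    have e1 := hprod y' hy' 1
    have hSne : Pr μ (S y') ≠ 0 := (hS y' hy').ne'
    have hR1ne : Pr μ ({ω | R ω = 1} ∩ S y') ≠ 0 := (hRS y' hy' 1 (Or.inr rfl)).ne'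
    rw [hρdef]
    rw [div_mul_eq_mul_div, eq_div_iff hR1ne]
    have key : Pr μ ({ω | M ω = m ∧ R ω = 0} ∩ S y') * Pr μ ({ω | R ω = 1} ∩ S y') *
        Pr μ (S y') =
        Pr μ ({ω | R ω = 0} ∩ S y') * Pr μ ({ω | M ω = m ∧ R ω = 1} ∩ S y') *
        Pr μ (S y') := by
      linear_combination Pr μ ({ω | R ω = 1} ∩ S y') * e0 - Pr μ ({ω | R ω = 0} ∩ S y') * e1
    exact mul_right_cancel₀ hSne key
  -- OddsR in terms of ρ
  have hOR : ∀ y' ∈ Set.range Y, OddsR μ X Y R G x y' = ρ y' / ρ 0 := by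
    intro y' hy'
    unfold OddsR cPr
    rw [hρdef]
    have h1 : Pr μ (S y') ≠ 0 := (hS y' hy').ne'
    have h2 : Pr μ (S 0) ≠ 0 := (hS 0 h0Y).ne'
    have h3 : Pr μ ({ω | R ω = 1} ∩ S y') ≠ 0 := (hRS y' hy' 1 (Or.inr rfl)).ne'
    have h4 : Pr μ ({ω | R ω = 0} ∩ S 0) ≠ 0 := (hRS 0 h0Y 0 (Or.inl rfl)).ne'
    have h5 : Pr μ ({ω | R ω = 1} ∩ S 0) ≠ 0 := (hRS 0 h0Y 1 (Or.inr rfl)).ne'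
    simp only [hSdef]
    simp only [hSdef] at h1 h2 h3 h4 h5
    field_simp
  -- partition of Aset
  have hPA : Pr μ Aset = ∑ y' ∈ T, Pr μ ({ω | Y ω = y'} ∩ Aset) := Pr_partition μ Y Aset
  -- cE numerator
  have hnum : (∑ ω, Bset.indicator
        (fun ω' => μ ω' * OddsR μ X Y R G (X ω') (Y ω')) ω) =
      ∑ y' ∈ T, OddsR μ X Y R G x y' * Pr μ ({ω | Y ω = y'} ∩ Bset) := by
    rw [sum_indicator_partition _ Y Bset]
    refine Finset.sum_congr rfl fun y' hy' => ?_
    have hcongr : ∀ ω ∈ ({ω' | Y ω' = y'} ∩ Bset),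
        μ ω * OddsR μ X Y R G (X ω) (Y ω) = OddsR μ X Y R G x y' * μ ω := by
      rintro ω ⟨hYω, hωB⟩
      rw [hYω, hωB.2.1, mul_comm]
    calc ∑ ω, ({ω' | Y ω' = y'} ∩ Bset).indicator
          (fun ω' => μ ω' * OddsR μ X Y R G (X ω') (Y ω')) ω
        = ∑ ω, ({ω' | Y ω' = y'} ∩ Bset).indicator
            (fun ω' => OddsR μ X Y R G x y' * μ ω') ω := by
          refine Finset.sum_congr rfl fun ω _ => ?_
          by_cases h : ω ∈ ({ω' | Y ω' = y'} ∩ Bset)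
          · rw [Set.indicator_of_mem h, Set.indicator_of_mem h]
            exact hcongr ω h
          · rw [Set.indicator_of_notMem h, Set.indicator_of_notMem h]
      _ = OddsR μ X Y R G x y' * Pr μ ({ω' | Y ω' = y'} ∩ Bset) := by
          unfold Pr
          rw [Finset.mul_sum]
          refine Finset.sum_congr rfl fun ω _ => ?_
          by_cases h : ω ∈ ({ω' | Y ω' = y'} ∩ Bset)
          · rw [Set.indicator_of_mem h, Set.indicator_of_mem h]
          · rw [Set.indicator_of_notMem h, Set.indicator_of_notMem h, mul_zero]
  -- positivity of aggregates
  have hPB_pos : 0 < Pr μ Bset := by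
    refine lt_of_lt_of_le (hb_pos y hy) (Pr_mono_aux hμ0 ?_)
    exact Set.inter_subset_right
  set s : ℝ := ∑ y' ∈ T, ρ y' * Pr μ ({ω | Y ω = y'} ∩ Bset) with hsdef
  have hs_pos : 0 < s := by
    refine Finset.sum_pos (fun y' hy' => ?_) ⟨y, hyT⟩
    exact mul_pos (hρ_pos y' (hTmem y' hy')) (hb_pos y' (hTmem y' hy'))
  have hρ0_pos : 0 < ρ 0 := hρ_pos 0 h0Y
  -- rewrite the partitions using tilt and OddsR
  have hPA' : Pr μ Aset = s := by
    rw [hPA]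
    exact Finset.sum_congr rfl fun y' hy' => htilt y' (hTmem y' hy')
  have hnum' : (∑ ω, Bset.indicator
        (fun ω' => μ ω' * OddsR μ X Y R G (X ω') (Y ω')) ω) = s / ρ 0 := by
    rw [hnum, hsdef, Finset.sum_div]
    refine Finset.sum_congr rfl fun y' hy' => ?_
    rw [hOR y' (hTmem y' hy')]
    ring
  -- now the goal
  unfold cPr cE
  rw [htilt y hy, hOR y hy, hPA', hnum']
  have hby := hb_pos y hy
  field_simp
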